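/- Let p be a finitely additive probability measure on a set algebra 𝔄 on X and let m_p be the induced mean. Then the p-completion of 𝔄 equals the set algebra {A ⊆ X : 𝟙_A ∈ I_p}, where I_p is the m_p-closure of the 𝔄-simple functions. In particular 𝔄 equals {A : 𝟙_A ∈ I_p} if and only if 𝔄 is p-closed. -/

import Mathlib

open Set

namespace Stmt2

/-- A Boolean set algebra on `X`. -/
def IsSetAlgebra' {X : Type*} (A : Set (Set X)) : Prop :=
  ∅ ∈ A ∧ Set.univ ∈ A ∧ (∀ s ∈ A, ∀ t ∈ A, s ∪ t ∈ A) ∧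
    (∀ s ∈ A, ∀ t ∈ A, s ∩ t ∈ A) ∧ (∀ s ∈ A, sᶜ ∈ A)

/-- An `𝔄`-simple real valued function together with the value of the induced mean `m_p`:
`SimpleWithMean 𝔄 p f v` holds if `f = ∑ cᵢ 𝟙_{Aᵢ}` with `Aᵢ ∈ 𝔄` and `v = ∑ cᵢ p(Aᵢ)`. -/
def SimpleWithMean {X : Type*} (𝔄 : Set (Set X)) (p : Set X → ℝ) (f : X → ℝ) (v : ℝ) : Prop :=
  ∃ (n : ℕ) (c : Fin n → ℝ) (s : Fin n → Set X),
    (∀ i, s i ∈ 𝔄) ∧ (f = fun x => ∑ i, c i * (s i).indicator 1 x) ∧ v = ∑ i, c i * p (s i)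

/-- `f` belongs to `I_p`, the `m_p`-closure of the `𝔄`-simple functions: for every `ε > 0`
there are `𝔄`-simple `f₁ ≤ f ≤ f₂` with `m_p (f₂ - f₁) < ε`. -/
def MemIp {X : Type*} (𝔄 : Set (Set X)) (p : Set X → ℝ) (f : X → ℝ) : Prop :=
  ∀ ε > (0 : ℝ), ∃ (f₁ f₂ : X → ℝ) (v₁ v₂ : ℝ),
    SimpleWithMean 𝔄 p f₁ v₁ ∧ SimpleWithMean 𝔄 p f₂ v₂ ∧
    (∀ x, f₁ x ≤ f x) ∧ (∀ x, f x ≤ f₂ x) ∧ v₂ - v₁ < ε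

/-- The `p`-completion of `𝔄`. -/
def PCompletion {X : Type*} (𝔄 : Set (Set X)) (p : Set X → ℝ) : Set (Set X) :=
  {A | ∀ ε > (0 : ℝ), ∃ A₁ ∈ 𝔄, ∃ A₂ ∈ 𝔄, A₁ ⊆ A ∧ A ⊆ A₂ ∧ p (A₂ \ A₁) < ε}

section Aux
open Finset

variable {X : Type*} {𝔄 : Set (Set X)} {p : Set X → ℝ}

private def atom {n : ℕ} (s : Fin n → Set X) (σ : Fin n → Bool) : Set X :=
  ⋂ i, if σ i then s i else (s i)ᶜ

private lemma mem_atom {n : ℕ} {s : Fin n → Set X} {σ : Fin n → Bool} {x : X} :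
    x ∈ atom s σ ↔ ∀ i, (x ∈ s i ↔ σ i = true) := by
  simp only [atom, Set.mem_iInter]
  apply forall_congr'
  intro i
  cases h : σ i <;> simp [h]

private lemma atom_disj {n : ℕ} {s : Fin n → Set X} {σ τ : Fin n → Bool} (h : σ ≠ τ) :
    atom s σ ∩ atom s τ = ∅ := by
  ext x
  simp only [Set.mem_inter_iff, Set.mem_empty_iff_false, iff_false, not_and]
  intro h1 h2
  refine h (funext fun i => ?_)
  have e1 := mem_atom.mp h1 i
  have e2 := mem_atom.mp h2 i
  cases hσ : σ i <;> cases hτ : τ i <;> simp_all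

private lemma biUnion_mem (h : IsSetAlgebra' 𝔄) {ι : Type*} (t : Finset ι) (B : ι → Set X)
    (hB : ∀ i ∈ t, B i ∈ 𝔄) : (⋃ i ∈ t, B i) ∈ 𝔄 := by
  classical
  induction t using Finset.induction with
  | empty => simpa using h.1
  | insert _ _ ha ih =>
    rw [Finset.set_biUnion_insert]
    exact h.2.2.1 _ (hB _ (Finset.mem_insert_self _ _)) _
      (ih fun i hi => hB i (Finset.mem_insert_of_mem hi))

private lemma biInter_mem (h : IsSetAlgebra' 𝔄) {ι : Type*} (t : Finset ι) (B : ι → Set X)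
    (hB : ∀ i ∈ t, B i ∈ 𝔄) : (⋂ i ∈ t, B i) ∈ 𝔄 := by
  classical
  induction t using Finset.induction with
  | empty => simpa using h.2.1
  | insert _ _ ha ih =>
    rw [Finset.set_biInter_insert]
    exact h.2.2.2.1 _ (hB _ (Finset.mem_insert_self _ _)) _
      (ih fun i hi => hB i (Finset.mem_insert_of_mem hi))

private lemma atom_mem (h : IsSetAlgebra' 𝔄) {n : ℕ} {s : Fin n → Set X}
    (hs : ∀ i, s i ∈ 𝔄) (σ : Fin n → Bool) : atom s σ ∈ 𝔄 := by
  have he : atom s σ = ⋂ i ∈ (Finset.univ : Finset (Fin n)), (if σ i then s i else (s i)ᶜ) := by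
    ext x; simp [atom]
  rw [he]
  exact biInter_mem h _ _ fun i _ => by
    cases hc : σ i <;> simp [hc, hs i, h.2.2.2.2 _ (hs i)]

private lemma p_biUnion (h : IsSetAlgebra' 𝔄) (hpe : p ∅ = 0)
    (hadd : ∀ A ∈ 𝔄, ∀ B ∈ 𝔄, A ∩ B = ∅ → p (A ∪ B) = p A + p B)
    {ι : Type*} (t : Finset ι) (B : ι → Set X)
    (hB : ∀ i ∈ t, B i ∈ 𝔄)
    (hdisj : ∀ i ∈ t, ∀ j ∈ t, i ≠ j → B i ∩ B j = ∅) :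
    p (⋃ i ∈ t, B i) = ∑ i ∈ t, p (B i) := by
  classical
  induction t using Finset.induction with
  | empty => simpa using hpe
  | @insert a t ha ih =>
    rw [Finset.set_biUnion_insert, Finset.sum_insert ha]
    have hU : (⋃ i ∈ t, B i) ∈ 𝔄 :=
      biUnion_mem h t B fun i hi => hB i (Finset.mem_insert_of_mem hi)
    have hd : B a ∩ ⋃ i ∈ t, B i = ∅ := by
      ext x
      simp only [Set.mem_inter_iff, Set.mem_iUnion, Set.mem_empty_iff_false, iff_false, not_and]
      rintro hxa ⟨j, hj, hxj⟩
      have : B a ∩ B j = ∅ := hdisj a (Finset.mem_insert_self _ _) j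
        (Finset.mem_insert_of_mem hj) (by rintro rfl; exact ha hj)
      exact absurd (Set.mem_inter hxa hxj) (by simp [this])
    rw [hadd _ (hB _ (Finset.mem_insert_self _ _)) _ hU hd,
      ih (fun i hi => hB i (Finset.mem_insert_of_mem hi))
        (fun i hi j hj => hdisj i (Finset.mem_insert_of_mem hi) j (Finset.mem_insert_of_mem hj))]

private lemma val_on_atom {n : ℕ} {s : Fin n → Set X} (σ : Fin n → Bool) (c : Fin n → ℝ) {x : X}
    (hx : x ∈ atom s σ) :
    ∑ i, c i * (s i).indicator 1 x = ∑ i, if σ i then c i else 0 := by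
  refine Finset.sum_congr rfl fun i _ => ?_
  cases h : σ i
  · have : x ∉ s i := by simp [mem_atom.mp hx i, h]
    simp [Set.indicator, this, h]
  · have : x ∈ s i := (mem_atom.mp hx i).mpr h
    simp [Set.indicator, this, h]

private lemma s_eq_biUnion_atoms {n : ℕ} (s : Fin n → Set X) (i : Fin n) :
    s i = ⋃ σ ∈ Finset.univ.filter (fun σ : Fin n → Bool => σ i = true), atom s σ := by
  classical
  ext x
  simp only [Set.mem_iUnion, Finset.mem_filter, Finset.mem_univ, true_and]
  constructor
  · intro hx
    exact ⟨fun j => decide (x ∈ s j), by simp [hx], mem_atom.mpr fun j => by simp⟩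
  · rintro ⟨σ, hσ, hxσ⟩
    exact (mem_atom.mp hxσ i).mpr hσ

private lemma mean_nonneg (h : IsSetAlgebra' 𝔄)
    (hp0 : ∀ A ∈ 𝔄, 0 ≤ p A) (hpe : p ∅ = 0)
    (hadd : ∀ A ∈ 𝔄, ∀ B ∈ 𝔄, A ∩ B = ∅ → p (A ∪ B) = p A + p B)
    {f : X → ℝ} {v : ℝ} (hf : SimpleWithMean 𝔄 p f v) (hf0 : ∀ x, 0 ≤ f x) : 0 ≤ v := by
  classical
  obtain ⟨n, c, s, hs, hfe, hv⟩ := hf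
  have hps : ∀ i, p (s i) =
      ∑ σ ∈ Finset.univ.filter (fun σ : Fin n → Bool => σ i = true), p (atom s σ) := by
    intro i
    rw [show p (s i) = p (⋃ σ ∈ Finset.univ.filter (fun σ : Fin n → Bool => σ i = true),
        atom s σ) from by rw [← s_eq_biUnion_atoms]]
    exact p_biUnion h hpe hadd _ _ (fun σ _ => atom_mem h hs σ)
      (fun σ _ τ _ hστ => atom_disj hστ)
  have hv' : v = ∑ σ : Fin n → Bool,
      (∑ i, if σ i then c i else 0) * p (atom s σ) := by
    rw [hv]
    simp_rw [hps, Finset.mul_sum, Finset.sum_filter]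
    rw [Finset.sum_comm]
    refine Finset.sum_congr rfl fun σ _ => ?_
    rw [Finset.sum_mul]
    refine Finset.sum_congr rfl fun i _ => ?_
    cases hσ : σ i <;> simp [hσ]
  rw [hv']
  refine Finset.sum_nonneg fun σ _ => ?_
  rcases Set.eq_empty_or_nonempty (atom s σ) with he | ⟨x, hx⟩
  · rw [he, hpe, mul_zero]
  · have h1 : 0 ≤ ∑ i, if σ i then c i else 0 := by
      rw [← val_on_atom σ c hx]
      have := hf0 x
      rw [hfe] at this
      exact this
    exact mul_nonneg h1 (hp0 _ (atom_mem h hs σ))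

private lemma simple_sub {f g : X → ℝ} {v w : ℝ}
    (hf : SimpleWithMean 𝔄 p f v) (hg : SimpleWithMean 𝔄 p g w) :
    SimpleWithMean 𝔄 p (fun x => g x - f x) (w - v) := by
  obtain ⟨n, c, s, hs, hfe, hv⟩ := hf
  obtain ⟨m, d, t, ht, hge, hw⟩ := hg
  refine ⟨m + n, Fin.append d (fun i => -(c i)), Fin.append t s, ?_, ?_, ?_⟩
  · intro i
    refine Fin.addCases (fun j => ?_) (fun j => ?_) i
    · rw [Fin.append_left]; exact ht j
    · rw [Fin.append_right]; exact hs j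
  · funext x
    rw [hfe, hge]
    rw [Fin.sum_univ_add]
    simp only [Fin.append_left, Fin.append_right, neg_mul]
    rw [Finset.sum_neg_distrib]
    ring
  · rw [hv, hw, Fin.sum_univ_add]
    simp only [Fin.append_left, Fin.append_right, neg_mul]
    rw [Finset.sum_neg_distrib]
    ring

private lemma mean_mono (h : IsSetAlgebra' 𝔄)
    (hp0 : ∀ A ∈ 𝔄, 0 ≤ p A) (hpe : p ∅ = 0)
    (hadd : ∀ A ∈ 𝔄, ∀ B ∈ 𝔄, A ∩ B = ∅ → p (A ∪ B) = p A + p B)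
    {f g : X → ℝ} {v w : ℝ}
    (hf : SimpleWithMean 𝔄 p f v) (hg : SimpleWithMean 𝔄 p g w)
    (hle : ∀ x, f x ≤ g x) : v ≤ w := by
  have := mean_nonneg h hp0 hpe hadd (simple_sub hf hg) fun x => sub_nonneg.mpr (hle x)
  linarith

private lemma levelset_mem (h : IsSetAlgebra' 𝔄) {f : X → ℝ} {v : ℝ}
    (hf : SimpleWithMean 𝔄 p f v) (r : ℝ) : {x | r ≤ f x} ∈ 𝔄 := by
  classical
  obtain ⟨n, c, s, hs, hfe, -⟩ := hf
  have he : {x | r ≤ f x} = ⋃ σ ∈ Finset.univ.filter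
      (fun σ : Fin n → Bool => r ≤ ∑ i, if σ i then c i else 0), atom s σ := by
    ext x
    simp only [Set.mem_setOf_eq, Set.mem_iUnion, Finset.mem_filter, Finset.mem_univ, true_and]
    constructor
    · intro hx
      have hxat : x ∈ atom s (fun j => decide (x ∈ s j)) := mem_atom.mpr fun j => by simp
      refine ⟨fun j => decide (x ∈ s j), ?_, hxat⟩
      rw [← val_on_atom (fun j => decide (x ∈ s j)) c hxat]
      rw [hfe] at hx
      exact hx
    · rintro ⟨σ, hσ, hxσ⟩
      rw [hfe]
      show r ≤ ∑ i, c i * (s i).indicator 1 x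
      rw [val_on_atom σ c hxσ]
      exact hσ
  rw [he]
  exact biUnion_mem h _ _ fun σ _ => atom_mem h hs σ

private lemma simple_indicator {B : Set X} (hB : B ∈ 𝔄) (c : ℝ) :
    SimpleWithMean 𝔄 p (fun x => c * B.indicator 1 x) (c * p B) :=
  ⟨1, fun _ => c, fun _ => B, fun _ => hB, by funext x; simp, by simp⟩

end Aux

/-- Let `p` be a finitely additive probability measure on a set algebra `𝔄` on `X` and `m_p`
the induced mean. Then the `p`-completion of `𝔄` equals `{A ⊆ X : 𝟙_A ∈ I_p}`; in particular
`𝔄 = {A : 𝟙_A ∈ I_p}` iff `𝔄` is `p`-closed (equals its own `p`-completion). -/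
theorem pCompletion_eq_indicator_mem_Ip {X : Type*} (𝔄 : Set (Set X)) (h𝔄 : IsSetAlgebra' 𝔄)
    (p : Set X → ℝ)
    (hp0 : ∀ A ∈ 𝔄, 0 ≤ p A) (hpe : p ∅ = 0) (hpX : p Set.univ = 1)
    (hadd : ∀ A ∈ 𝔄, ∀ B ∈ 𝔄, A ∩ B = ∅ → p (A ∪ B) = p A + p B) :
    PCompletion 𝔄 p = {A : Set X | MemIp 𝔄 p (A.indicator 1)} ∧
      (𝔄 = {A : Set X | MemIp 𝔄 p (A.indicator 1)} ↔ PCompletion 𝔄 p = 𝔄) := by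
  have main : PCompletion 𝔄 p = {A : Set X | MemIp 𝔄 p (A.indicator 1)} := by
    ext A
    simp only [Set.mem_setOf_eq]
    constructor
    · intro hA ε hε
      obtain ⟨A₁, h1, A₂, h2, hs1, hs2, hlt⟩ := hA ε hε
      have hA1 : SimpleWithMean 𝔄 p (A₁.indicator 1) (p A₁) :=
        ⟨1, fun _ => 1, fun _ => A₁, fun _ => h1, by funext x; simp, by simp⟩
      have hA2 : SimpleWithMean 𝔄 p (A₂.indicator 1) (p A₂) :=
        ⟨1, fun _ => 1, fun _ => A₂, fun _ => h2, by funext x; simp, by simp⟩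
      refine ⟨A₁.indicator 1, A₂.indicator 1, p A₁, p A₂, hA1, hA2, ?_, ?_, ?_⟩
      · exact fun x => Set.indicator_le_indicator_of_subset hs1 (fun a => zero_le_one) x
      · exact fun x => Set.indicator_le_indicator_of_subset hs2 (fun a => zero_le_one) x
      · have hd : A₂ \ A₁ ∈ 𝔄 := by
          rw [Set.diff_eq]
          exact h𝔄.2.2.2.1 _ h2 _ (h𝔄.2.2.2.2 _ h1)
        have h12 : A₁ ⊆ A₂ := hs1.trans hs2
        have : p A₂ = p A₁ + p (A₂ \ A₁) := by
          rw [← hadd _ h1 _ hd (Set.inter_diff_self _ _), Set.union_diff_cancel h12]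
        linarith
    · intro hA ε hε
      obtain ⟨f₁, f₂, v₁, v₂, h1, h2, hle1, hle2, hlt⟩ := hA (ε / 2) (by linarith)
      set A₁ := {x | (1:ℝ)/2 ≤ f₁ x} with hA₁
      set A₂ := {x | (1:ℝ)/2 ≤ f₂ x} with hA₂
      have hA1m : A₁ ∈ 𝔄 := levelset_mem h𝔄 h1 _
      have hA2m : A₂ ∈ 𝔄 := levelset_mem h𝔄 h2 _
      have hs1 : A₁ ⊆ A := by
        intro x hx
        by_contra hxA
        have := hle1 x
        rw [Set.indicator_of_notMem hxA] at this
        have : (1:ℝ)/2 ≤ 0 := le_trans hx this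
        linarith
      have hs2 : A ⊆ A₂ := by
        intro x hx
        have := hle2 x
        rw [Set.indicator_of_mem hx] at this
        show (1:ℝ)/2 ≤ f₂ x
        simp only [Pi.one_apply] at this
        linarith
      have hdm : A₂ \ A₁ ∈ 𝔄 := by
        rw [Set.diff_eq]
        exact h𝔄.2.2.2.1 _ hA2m _ (h𝔄.2.2.2.2 _ hA1m)
      have key : ∀ x, (1/2 : ℝ) * (A₂ \ A₁).indicator 1 x ≤ f₂ x - f₁ x := by
        intro x
        by_cases hx : x ∈ A₂ \ A₁
        · rw [Set.indicator_of_mem hx]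
          have hx2 : (1:ℝ)/2 ≤ f₂ x := hx.1
          have hx1 : ¬ (1:ℝ)/2 ≤ f₁ x := hx.2
          by_cases hxA : x ∈ A
          · have := hle2 x
            rw [Set.indicator_of_mem hxA] at this
            simp only [Pi.one_apply] at this ⊢
            push_neg at hx1
            linarith
          · have := hle1 x
            rw [Set.indicator_of_notMem hxA] at this
            simp only [Pi.one_apply]
            linarith
        · rw [Set.indicator_of_notMem hx]
          have := (hle1 x).trans (hle2 x)
          linarith
      have hmono : (1/2 : ℝ) * p (A₂ \ A₁) ≤ v₂ - v₁ :=
        mean_mono h𝔄 hp0 hpe hadd (simple_indicator hdm (1/2)) (simple_sub h1 h2) key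
      refine ⟨A₁, hA1m, A₂, hA2m, hs1, hs2, ?_⟩
      linarith
  refine ⟨main, ?_⟩
  rw [← main]
  exact eq_comm

end Stmt2
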